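/- Let M ≥ 1 be an integer, let N_0, N_1, …, N_M be nonnegative real numbers, and let c, n ≥ 0 be real numbers such that Σ_{j=0}^{k} N_j ≤ c·n·k for every integer k with 1 ≤ k ≤ M. Then Σ_{k=0}^{M} 2·N_k/((k+1)(k+2)) ≤ 12·c·n. -/

import Mathlib

/-- If partial sums satisfy `∑_{j=0}^k N_j ≤ c n k` for `1 ≤ k ≤ M`,
then `∑_{k=0}^M 2 N_k /((k+1)(k+2)) ≤ 12 c n`. -/
theorem weighted_sum_mixed_bound
    (M : ℕ) (hM : 1 ≤ M) (N : ℕ → ℝ) (hN : ∀ k, k ≤ M → 0 ≤ N k)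
    (c n : ℝ) (hc : 0 ≤ c) (hn : 0 ≤ n)
    (hsum : ∀ k : ℕ, 1 ≤ k → k ≤ M →
      ∑ j ∈ Finset.range (k + 1), N j ≤ c * n * (k : ℝ)) :
    ∑ k ∈ Finset.range (M + 1),
        2 * N k / (((k : ℝ) + 1) * ((k : ℝ) + 2)) ≤ 12 * c * n := by
  set w : ℕ → ℝ := fun k => 2 / (((k : ℝ) + 1) * ((k : ℝ) + 2)) with hw
  have hcn : 0 ≤ c * n := mul_nonneg hc hn
  -- partial sums bound
  have hSle : ∀ i, i ≤ M → ∑ j ∈ Finset.range (i + 1), N j ≤ c * n * ((i : ℝ) + 1) := by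
    intro i hi
    rcases Nat.eq_zero_or_pos i with h0 | h1
    · subst h0
      have h1 := hsum 1 le_rfl hM
      have h2 : ∑ j ∈ Finset.range 1, N j ≤ ∑ j ∈ Finset.range 2, N j := by
        simp [Finset.sum_range_succ]
        exact hN 1 hM
      calc ∑ j ∈ Finset.range 1, N j ≤ ∑ j ∈ Finset.range 2, N j := h2
        _ ≤ c * n * 1 := by simpa using h1
        _ = c * n * ((0 : ℕ) + 1 : ℝ) := by norm_num
    · calc ∑ j ∈ Finset.range (i + 1), N j ≤ c * n * i := hsum i h1 hi
        _ ≤ c * n * ((i : ℝ) + 1) := by nlinarith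
  -- rewrite summand
  have hre : ∀ k ∈ Finset.range (M + 1),
      2 * N k / (((k : ℝ) + 1) * ((k : ℝ) + 2)) = w k • N k := by
    intro k _
    simp only [hw, smul_eq_mul]
    ring
  rw [Finset.sum_congr rfl hre, Finset.sum_range_by_parts w N (M + 1)]
  simp only [Nat.add_sub_cancel, smul_eq_mul]
  -- monotonicity and positivity of w
  have hwpos : ∀ k : ℕ, 0 ≤ w k := by
    intro k; apply div_nonneg (by norm_num); positivity
  have hwmono : ∀ k : ℕ, w (k + 1) ≤ w k := by
    intro k
    simp only [hw]
    rw [div_le_div_iff₀ (by positivity) (by positivity)]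
    push_cast
    nlinarith [Nat.cast_nonneg (α := ℝ) k]
  have hb1 : w M * ∑ i ∈ Finset.range (M + 1), N i ≤ w M * (c * n * ((M : ℝ) + 1)) :=
    mul_le_mul_of_nonneg_left (hSle M le_rfl) (hwpos M)
  have hb2 : ∀ i ∈ Finset.range M,
      -((w (i + 1) - w i) * ∑ j ∈ Finset.range (i + 1), N j)
        ≤ c * n * (4 / ((i : ℝ) + 2)) - c * n * (4 / ((i : ℝ) + 3)) := by
    intro i hi
    have hneg : -((w (i + 1) - w i) * ∑ j ∈ Finset.range (i + 1), N j)
        = (w i - w (i + 1)) * ∑ j ∈ Finset.range (i + 1), N j := by ring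
    rw [hneg]
    have hiM : i ≤ M := le_of_lt (Finset.mem_range.mp hi)
    have hwd : 0 ≤ w i - w (i + 1) := sub_nonneg.mpr (hwmono i)
    have h := mul_le_mul_of_nonneg_left (hSle i hiM) hwd
    refine le_trans h (le_of_eq ?_)
    simp only [hw]
    push_cast
    have h1 : ((i : ℝ) + 1) ≠ 0 := by positivity
    have h2 : ((i : ℝ) + 2) ≠ 0 := by positivity
    have h3 : ((i : ℝ) + 3) ≠ 0 := by positivity
    field_simp
    ring
  have hb2' : ∑ i ∈ Finset.range M, -((w (i + 1) - w i) * ∑ j ∈ Finset.range (i + 1), N j)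
      ≤ c * n * (4 / 2) - c * n * (4 / ((M : ℝ) + 2)) := by
    have htel : ∑ i ∈ Finset.range M,
        (c * n * (4 / ((i : ℝ) + 2)) - c * n * (4 / ((i : ℝ) + 3)))
        = c * n * (4 / 2) - c * n * (4 / ((M : ℝ) + 2)) := by
      calc ∑ i ∈ Finset.range M,
            (c * n * (4 / ((i : ℝ) + 2)) - c * n * (4 / ((i : ℝ) + 3)))
          = ∑ i ∈ Finset.range M,
            ((fun i : ℕ => c * n * (4 / ((i : ℝ) + 2))) i
              - (fun i : ℕ => c * n * (4 / ((i : ℝ) + 2))) (i + 1)) := by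
            apply Finset.sum_congr rfl
            intro x _
            push_cast
            ring_nf
        _ = _ := by
            rw [Finset.sum_range_sub' (fun i : ℕ => c * n * (4 / ((i : ℝ) + 2))) M]
            norm_num
    calc ∑ i ∈ Finset.range M, -((w (i + 1) - w i) * ∑ j ∈ Finset.range (i + 1), N j)
        ≤ ∑ i ∈ Finset.range M,
            (c * n * (4 / ((i : ℝ) + 2)) - c * n * (4 / ((i : ℝ) + 3))) :=
          Finset.sum_le_sum hb2
      _ = _ := htel
  rw [sub_eq_add_neg, ← Finset.sum_neg_distrib]
  have hfinal : w M * (c * n * ((M : ℝ) + 1)) + (c * n * (4 / 2) - c * n * (4 / ((M : ℝ) + 2)))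
      ≤ 12 * c * n := by
    have hM2 : (2:ℝ) ≤ (M : ℝ) + 2 := by
      have : (0:ℝ) ≤ (M:ℝ) := Nat.cast_nonneg M
      linarith
    have hw1 : w M * ((M : ℝ) + 1) = 2 / ((M : ℝ) + 2) := by
      simp only [hw]
      have h1 : ((M : ℝ) + 1) ≠ 0 := by positivity
      have h2 : ((M : ℝ) + 2) ≠ 0 := by positivity
      field_simp
    have hw2 : 2 / ((M : ℝ) + 2) ≤ 1 := by
      rw [div_le_one (by positivity)]; linarith
    have hv : 0 ≤ 4 / ((M : ℝ) + 2) := by positivity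
    have heq : w M * (c * n * ((M : ℝ) + 1)) = c * n * (w M * ((M : ℝ) + 1)) := by ring
    rw [heq, hw1]
    nlinarith [mul_le_mul_of_nonneg_left hw2 hcn, mul_nonneg hcn hv]
  exact le_trans (add_le_add hb1 hb2') hfinal
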